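/- arXiv:2401.17817 — 10 statements merged into one kernel-verified Lean document; each statement's English description precedes it below -/
import Mathlib

section
/- Let D be a multipartite tournament and let u and v be two non-sink vertices belonging to distinct partite sets of D with (u,v) an arc of D. Then the following are equivalent: (i) u and v are not adjacent in the (1,2)-step competition graph C_{1,2}(D); (ii) either v is the unique out-neighbor of u, or else N⁺(u) ∩ N⁺(v) = ∅ and there exists a partite set X of D such that N⁺(v) ⊆ X and N⁺(u) ⊆ X ∪ {v}. -/
/-- Adjacency in the (1,2)-step competition graph `C_{1,2}(D)` of the (simple) digraph `D`
with arc relation `A`: there is a vertex `w` distinct from `u` and `v` such that either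
(`d_{D-v}(u,w) ≤ 1` and `d_{D-u}(v,w) ≤ 2`) or (`d_{D-u}(v,w) ≤ 1` and `d_{D-v}(u,w) ≤ 2`). -/
def CompAdj {V : Type*} (A : V → V → Prop) (u v : V) : Prop :=
  u ≠ v ∧ ∃ w, w ≠ u ∧ w ≠ v ∧
    ((A u w ∧ (A v w ∨ ∃ z, z ≠ u ∧ A v z ∧ A z w)) ∨
     (A v w ∧ (A u w ∨ ∃ z, z ≠ v ∧ A u z ∧ A z w)))

/-- The (1,2)-step competition graph `C_{1,2}(D)` of the digraph with arc relation `A`. -/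
def compGraph {V : Type*} (A : V → V → Prop) : SimpleGraph V where
  Adj := CompAdj A
  symm := by
    constructor
    rintro u v ⟨hne, w, h1, h2, h3⟩
    exact ⟨hne.symm, w, h2, h1, h3.symm⟩
  loopless := by constructor; rintro u ⟨hne, -⟩; exact hne rfl

/-- Vertices `u` and `v` `(1,2)`-compete in the digraph with arc relation `A`: there is a
vertex `w` distinct from `u` and `v` such that either (`u → w` and there is a directed path
of length 2 from `v` to `w` not traversing `u`) or vice versa. -/
def OneTwoCompete {V : Type*} (A : V → V → Prop) (u v : V) : Prop :=
  ∃ w, w ≠ u ∧ w ≠ v ∧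
    ((A u w ∧ ∃ z, z ≠ u ∧ A v z ∧ A z w) ∨
     (A v w ∧ ∃ z, z ≠ v ∧ A u z ∧ A z w))

/-- `A` is an orientation of the complete multipartite graph whose parts are the fibres of
`p : V → ι`: no arcs within a part, and exactly one arc between any two vertices in
different parts. -/
def IsCompleteMultipartiteOrientation {V ι : Type*} (A : V → V → Prop) (p : V → ι) : Prop :=
  (∀ u v : V, p u = p v → ¬ A u v) ∧
  ∀ u v : V, p u ≠ p v → (A u v ∨ A v u) ∧ ¬ (A u v ∧ A v u)

/-- A multipartite tournament: an orientation of a complete `k`-partite graph with `k ≥ 3`,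
whose partite sets are the (nonempty) fibres of `p : V → ι`. -/
def IsMultipartiteTournament {V ι : Type*} [Fintype ι] (A : V → V → Prop) (p : V → ι) : Prop :=
  Function.Surjective p ∧ 3 ≤ Fintype.card ι ∧ IsCompleteMultipartiteOrientation A p

/-- A multipartite tournament is tight if every partite set is a clique in `C_{1,2}(D)`. -/
def IsTight {V ι : Type*} (A : V → V → Prop) (p : V → ι) : Prop :=
  ∀ u v : V, u ≠ v → p u = p v → CompAdj A u v

/-- A tournament: an orientation of a complete graph. -/
def IsTournament {V : Type*} (A : V → V → Prop) : Prop :=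
  (∀ u, ¬ A u u) ∧ ∀ u v : V, u ≠ v → (A u v ∨ A v u) ∧ ¬ (A u v ∧ A v u)

/-- Let `D` be a multipartite tournament and let `u` and `v` be two non-sink
vertices belonging to distinct partite sets of `D` with `(u,v)` an arc of `D`. Then `u` and
`v` are not adjacent in `C_{1,2}(D)` iff either `v` is the unique out-neighbor of `u`, or
`N⁺(u) ∩ N⁺(v) = ∅` and there is a partite set `X` with `N⁺(v) ⊆ X` and
`N⁺(u) ⊆ X ∪ {v}`. -/
theorem stmt3 {V ι : Type*} [Fintype V] [Fintype ι]
    (A : V → V → Prop) (p : V → ι) (hD : IsMultipartiteTournament A p)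
    (u v : V) (hdiff : p u ≠ p v) (harc : A u v)
    (hu : ∃ w, A u w) (hv : ∃ w, A v w) :
    ¬ (compGraph A).Adj u v ↔
      ((∀ w, A u w ↔ w = v) ∨
       ({w | A u w} ∩ {w | A v w} = ∅ ∧
        ∃ i : ι, {w | A v w} ⊆ {w | p w = i} ∧ {w | A u w} ⊆ {w | p w = i} ∪ {v})) := by
  obtain ⟨-, -, hsame, harcs⟩ := hD
  have huv : u ≠ v := fun h => hdiff (by rw [h])
  have hne : ∀ {a b : V}, A a b → a ≠ b := fun {a b} hab h =>
    hsame a b (by rw [h]) hab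
  have hasym : ∀ {a b : V}, A a b → ¬ A b a := by
    intro a b hab hba
    by_cases h : p a = p b
    · exact hsame a b h hab
    · exact (harcs a b h).2 ⟨hab, hba⟩
  change ¬ CompAdj A u v ↔ _
  constructor
  · intro hnadj
    by_cases h1 : ∃ w, A u w ∧ w ≠ v
    · obtain ⟨w0, hw0, hw0v⟩ := h1
      right
      have hdisj' : ∀ x, ¬ (A u x ∧ A v x) := by
        rintro x ⟨hux, hvx⟩
        exact hnadj ⟨huv, x, (hne hux).symm, (hne hvx).symm, Or.inl ⟨hux, Or.inl hvx⟩⟩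
      have key : ∀ z w, A v z → A u w → w ≠ v → p z = p w := by
        intro z w hvz huw hwv
        by_contra hzw
        have hzu : z ≠ u := fun h => hasym harc (h ▸ hvz)
        have hzv : z ≠ v := (hne hvz).symm
        have hwu : w ≠ u := (hne huw).symm
        have hzw' : z ≠ w := fun h => hdisj' w ⟨huw, h ▸ hvz⟩
        rcases (harcs z w hzw).1 with h | h
        · exact hnadj ⟨huv, w, hwu, hwv, Or.inl ⟨huw, Or.inr ⟨z, hzu, hvz, h⟩⟩⟩
        · exact hnadj ⟨huv, z, hzu, hzv, Or.inr ⟨hvz, Or.inr ⟨w, hwv, huw, h⟩⟩⟩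
      obtain ⟨z0, hz0⟩ := hv
      refine ⟨?_, p w0, ?_, ?_⟩
      · exact Set.eq_empty_iff_forall_notMem.mpr fun x hx => hdisj' x ⟨hx.1, hx.2⟩
      · exact fun z hz => key z w0 hz hw0 hw0v
      · intro w hw
        by_cases hwv : w = v
        · exact Or.inr hwv
        · exact Or.inl ((key z0 w hz0 hw hwv).symm.trans (key z0 w0 hz0 hw0 hw0v))
    · left
      intro w
      constructor
      · intro haw
        by_contra hw
        exact h1 ⟨w, haw, hw⟩
      · rintro rfl; exact harc
  · rintro (h1 | ⟨hdisj, i, hvX, huX⟩) ⟨-, w, hwu, hwv, hcase⟩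
    · rcases hcase with ⟨huw, -⟩ | ⟨hvw, huw | ⟨z, hzv, huz, hzw⟩⟩
      · exact hwv ((h1 w).mp huw)
      · exact hwv ((h1 w).mp huw)
      · exact hzv ((h1 z).mp huz)
    · have hdisj' : ∀ x, ¬ (A u x ∧ A v x) := by
        intro x hx
        have : x ∈ ({w | A u w} ∩ {w | A v w} : Set V) := ⟨hx.1, hx.2⟩
        rw [hdisj] at this
        exact this
      rcases hcase with ⟨huw, hvw | ⟨z, hzu, hvz, hzw⟩⟩ | ⟨hvw, huw | ⟨z, hzv, huz, hzw⟩⟩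
      · exact hdisj' w ⟨huw, hvw⟩
      · have hpw : p w = i := by
          rcases huX huw with h | h
          · exact h
          · exact absurd h hwv
        exact hsame z w ((hvX hvz).trans hpw.symm) hzw
      · exact hdisj' w ⟨huw, hvw⟩
      · have hpz : p z = i := by
          rcases huX huz with h | h
          · exact h
          · exact absurd h hzv
        exact hsame z w (hpz.trans (hvX hvw).symm) hzw
end

section
/- Let D be a multipartite tournament and let u and v be two non-sink vertices of D. Suppose that (1) v is not the only out-neighbor of u, (2) u is not the only out-neighbor of v, and (3) for any partite set X of D with N⁺(v) ⊆ X one has N⁺(u) ⊄ X ∪ {v}, and for any partite set X with N⁺(u) ⊆ X one has N⁺(v) ⊄ X ∪ {u}. Then u and v are adjacent in the (1,2)-step competition graph C_{1,2}(D). -/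
/-- Let `D` be a multipartite tournament and `u`, `v` two non-sink vertices
such that (1) `v` is not the only out-neighbor of `u`, (2) `u` is not the only out-neighbor
of `v`, and (3) for any partite set `X` with `N⁺(v) ⊆ X` one has `N⁺(u) ⊄ X ∪ {v}`, and
for any partite set `X` with `N⁺(u) ⊆ X` one has `N⁺(v) ⊄ X ∪ {u}`. Then `u` and `v` are
adjacent in `C_{1,2}(D)`. -/
theorem stmt4 {V ι : Type*} [Fintype V] [Fintype ι]
    (A : V → V → Prop) (p : V → ι) (hD : IsMultipartiteTournament A p)
    (u v : V) (huv : u ≠ v) (hu : ∃ w, A u w) (hv : ∃ w, A v w)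
    (h1 : {w | A u w} ≠ {v})
    (h2 : {w | A v w} ≠ {u})
    (h3 : ∀ i : ι, {w | A v w} ⊆ {w | p w = i} → ¬ ({w | A u w} ⊆ {w | p w = i} ∪ {v}))
    (h4 : ∀ i : ι, {w | A u w} ⊆ {w | p w = i} → ¬ ({w | A v w} ⊆ {w | p w = i} ∪ {u})) :
    (compGraph A).Adj u v := by
  obtain ⟨-, -, hintra, hori⟩ := hD
  have hself : ∀ x, ¬ A x x := fun x => hintra x x rfl
  have hexu : ∃ w, A u w ∧ w ≠ v := by
    by_contra h
    push_neg at h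
    obtain ⟨w0, hw0⟩ := hu
    have hv0 := h w0 hw0
    apply h1
    ext x
    simp only [Set.mem_setOf_eq, Set.mem_singleton_iff]
    exact ⟨h x, fun hx => hx ▸ (hv0 ▸ hw0)⟩
  have hexv : ∃ z, A v z ∧ z ≠ u := by
    by_contra h
    push_neg at h
    obtain ⟨z0, hz0⟩ := hv
    have hu0 := h z0 hz0
    apply h2
    ext x
    simp only [Set.mem_setOf_eq, Set.mem_singleton_iff]
    exact ⟨h x, fun hx => hx ▸ (hu0 ▸ hz0)⟩
  by_contra hadj
  have nocommon : ∀ w, A u w → A v w → False := by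
    intro w hw hz
    exact hadj ⟨huv, w, fun h => hself u (h ▸ hw), fun h => hself v (h ▸ hz),
      Or.inl ⟨hw, Or.inl hz⟩⟩
  have key : ∀ w z, A u w → w ≠ v → A v z → z ≠ u → p w = p z := by
    intro w z hw hwv hz hzu
    by_cases hwz : w = z
    · exact absurd (hwz ▸ hz) (fun h => nocommon w hw h)
    by_contra hpne
    have hwu : w ≠ u := fun h => hself u (h ▸ hw)
    have hzv : z ≠ v := fun h => hself v (h ▸ hz)
    rcases (hori w z hpne).1 with hwz' | hzw
    · exact hadj ⟨huv, z, hzu, hzv, Or.inr ⟨hz, Or.inr ⟨w, hwv, hw, hwz'⟩⟩⟩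
    · exact hadj ⟨huv, w, hwu, hwv, Or.inl ⟨hw, Or.inr ⟨z, hzu, hz, hzw⟩⟩⟩
  obtain ⟨w₀, hw₀, hw₀v⟩ := hexu
  obtain ⟨z₀, hz₀, hz₀u⟩ := hexv
  set i := p z₀ with hi
  have hNu : {w | A u w} ⊆ {w | p w = i} ∪ {v} := by
    intro w hw
    by_cases hwv : w = v
    · exact Or.inr hwv
    · exact Or.inl (key w z₀ hw hwv hz₀ hz₀u)
  have hNv : {z | A v z} ⊆ {w | p w = i} ∪ {u} := by
    intro z hz
    by_cases hzu : z = u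
    · exact Or.inr hzu
    · exact Or.inl ((key w₀ z hw₀ hw₀v hz hzu).symm.trans (key w₀ z₀ hw₀ hw₀v hz₀ hz₀u))
  by_cases hAuv : A u v
  · have hpne : p u ≠ p v := fun h => hintra u v h hAuv
    have hnvu : ¬ A v u := fun h => (hori u v hpne).2 ⟨hAuv, h⟩
    refine h3 i ?_ hNu
    intro z hz
    rcases hNv hz with h | h
    · exact h
    · exact absurd (h ▸ hz) hnvu
  · refine h4 i ?_ hNv
    intro w hw
    rcases hNu hw with h | h
    · exact h
    · exact absurd (h ▸ hw) hAuv
end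

section
/- Let D be a tight multipartite tournament. If D has a sink v, then the (1,2)-step competition graph C_{1,2}(D) is isomorphic to the disjoint union of the complete graph K_{|V(D)|−1} and an isolated vertex (namely v). -/
/-- Let `D` be a tight multipartite tournament. If `D` has a sink `v`, then
`C_{1,2}(D)` is isomorphic to the complete graph `K_{|V(D)|-1}` together with an isolated
vertex (namely `v`): two vertices are adjacent iff they are distinct and both differ
from `v`. -/
theorem stmt5 {V ι : Type*} [Fintype V] [Fintype ι]
    (A : V → V → Prop) (p : V → ι) (hD : IsMultipartiteTournament A p)
    (htight : IsTight A p) (v : V) (hsink : ∀ w, ¬ A v w) :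
    ∀ x y : V, (compGraph A).Adj x y ↔ (x ≠ y ∧ x ≠ v ∧ y ≠ v) := by
  obtain ⟨-, -, hno, horient⟩ := hD
  -- no vertex is adjacent (in compGraph) to v
  have hnadj : ∀ y : V, ¬ CompAdj A v y := by
    rintro y ⟨hne, w, hwv, hwy, h⟩
    rcases h with ⟨hvw, -⟩ | ⟨-, hvw | ⟨z, -, hvz, -⟩⟩
    · exact hsink w hvw
    · exact hsink w hvw
    · exact hsink z hvz
  -- v's part is a singleton
  have hpart : ∀ x : V, x ≠ v → p x ≠ p v := by
    intro x hx hpx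
    exact hnadj x ((compGraph A).adj_symm (htight x v hx hpx))
  have hAv : ∀ x : V, x ≠ v → A x v := by
    intro x hx
    rcases (horient x v (hpart x hx)).1 with h | h
    · exact h
    · exact absurd h (hsink x)
  intro x y
  constructor
  · rintro ⟨hne, hadj⟩
    refine ⟨hne, ?_, ?_⟩
    · rintro rfl; exact hnadj y ⟨hne, hadj⟩
    · rintro rfl
      exact hnadj x ((compGraph A).adj_symm ⟨hne, hadj⟩)
  · rintro ⟨hne, hxv, hyv⟩
    by_cases hp : p x = p y
    · exact htight x y hne hp
    · exact ⟨hne, v, hxv.symm, hyv.symm,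
        Or.inl ⟨hAv x hxv, Or.inl (hAv y hyv)⟩⟩
end

section
/- Let D be a tight multipartite tournament. Then every anti-{1,2}-competing set of D (i.e., every stable set of C_{1,2}(D)) has size at most three. -/
/-- Let `D` be a tight multipartite tournament. Then every
anti-`{1,2}`-competing set of `D` (i.e., every stable set of `C_{1,2}(D)`) has size at
most three. -/
theorem stmt6 {V ι : Type*} [Fintype V] [Fintype ι]
    (A : V → V → Prop) (p : V → ι) (hD : IsMultipartiteTournament A p)
    (htight : IsTight A p) :
    ∀ S : Finset V, (∀ x ∈ S, ∀ y ∈ S, x ≠ y → ¬ (compGraph A).Adj x y) → S.card ≤ 3 := by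
  classical
  obtain ⟨-, -, hno, hor⟩ := hD
  intro S hstab
  by_contra hcard
  push_neg at hcard
  -- extract four distinct elements
  obtain ⟨a, ha⟩ : S.Nonempty := Finset.card_pos.mp (by omega)
  have h1 : 3 ≤ (S.erase a).card := by
    rw [Finset.card_erase_of_mem ha]; omega
  obtain ⟨b, hb⟩ : (S.erase a).Nonempty := Finset.card_pos.mp (by omega)
  have h2 : 2 ≤ ((S.erase a).erase b).card := by
    rw [Finset.card_erase_of_mem hb]; omega
  obtain ⟨c, hc⟩ : ((S.erase a).erase b).Nonempty := Finset.card_pos.mp (by omega)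
  have h3 : 1 ≤ (((S.erase a).erase b).erase c).card := by
    rw [Finset.card_erase_of_mem hc]; omega
  obtain ⟨d, hd⟩ : (((S.erase a).erase b).erase c).Nonempty := Finset.card_pos.mp (by omega)
  rw [Finset.mem_erase] at hd
  obtain ⟨hdc, hd⟩ := hd
  rw [Finset.mem_erase] at hd hc
  obtain ⟨hdb, hd⟩ := hd
  obtain ⟨hcb, hc⟩ := hc
  rw [Finset.mem_erase] at hd hc hb
  obtain ⟨hda, hdS⟩ := hd
  obtain ⟨hca, hcS⟩ := hc
  obtain ⟨hba, hbS⟩ := hb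
  have haS := ha
  -- any two members of S are joined by an arc
  have arc : ∀ x ∈ S, ∀ y ∈ S, x ≠ y → A x y ∨ A y x := by
    intro x hx y hy hxy
    by_cases hp : p x = p y
    · exact absurd (htight x y hxy hp) (hstab x hx y hy hxy)
    · exact (hor x y hp).1
  -- no two members of S have a common out-neighbour
  have noc : ∀ x ∈ S, ∀ y ∈ S, ∀ z : V, x ≠ y → z ≠ x → z ≠ y →
      ¬ (A x z ∧ A y z) := by
    intro x hx y hy z hxy hzx hzy ⟨h1, h2⟩
    exact hstab x hx y hy hxy ⟨hxy, z, hzx, hzy, Or.inl ⟨h1, Or.inl h2⟩⟩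
  have hab := arc a haS b hbS hba.symm
  have hac := arc a haS c hcS hca.symm
  have had := arc a haS d hdS hda.symm
  have hbc := arc b hbS c hcS hcb.symm
  have hbd := arc b hbS d hdS hdb.symm
  have hcd := arc c hcS d hdS hdc.symm
  have n1 := noc a haS b hbS c hba.symm hca hcb
  have n2 := noc a haS b hbS d hba.symm hda hdb
  have n3 := noc a haS c hcS b hca.symm hba hcb.symm
  have n4 := noc a haS c hcS d hca.symm hda hdc
  have n5 := noc a haS d hdS b hda.symm hba hdb.symm
  have n6 := noc a haS d hdS c hda.symm hca hdc.symm
  have n7 := noc b hbS c hcS a hcb.symm hba.symm hca.symm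
  have n8 := noc b hbS c hcS d hcb.symm hdb hdc
  have n9 := noc b hbS d hdS a hdb.symm hba.symm hda.symm
  have n10 := noc b hbS d hdS c hdb.symm hcb hdc.symm
  have n11 := noc c hcS d hdS a hdc.symm hca.symm hda.symm
  have n12 := noc c hcS d hdS b hdc.symm hcb.symm hdb.symm
  rcases hab with h1|h1 <;> rcases hac with h2|h2 <;> rcases had with h3|h3 <;>
    rcases hbc with h4|h4 <;> rcases hbd with h5|h5 <;> rcases hcd with h6|h6 <;>
    first
    | exact n1 ⟨‹A a c›, ‹A b c›⟩
    | exact n2 ⟨‹A a d›, ‹A b d›⟩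
    | exact n3 ⟨‹A a b›, ‹A c b›⟩
    | exact n4 ⟨‹A a d›, ‹A c d›⟩
    | exact n5 ⟨‹A a b›, ‹A d b›⟩
    | exact n6 ⟨‹A a c›, ‹A d c›⟩
    | exact n7 ⟨‹A b a›, ‹A c a›⟩
    | exact n8 ⟨‹A b d›, ‹A c d›⟩
    | exact n9 ⟨‹A b a›, ‹A d a›⟩
    | exact n10 ⟨‹A b c›, ‹A d c›⟩
    | exact n11 ⟨‹A c a›, ‹A d a›⟩
    | exact n12 ⟨‹A c b›, ‹A d b›⟩
end

section
/- Let D be a tournament with at least five vertices. If each vertex of D has outdegree at least two, then the (1,2)-step competition graph C_{1,2}(D) is complete. -/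
/-- Let `D` be a tournament with at least five vertices. If each vertex of `D`
has outdegree at least two, then `C_{1,2}(D)` is complete. -/
theorem stmt7 {V : Type*} [Fintype V] (A : V → V → Prop) (hT : IsTournament A)
    (hcard : 5 ≤ Fintype.card V) (hdeg : ∀ v : V, 2 ≤ {w | A v w}.ncard) :
    compGraph A = ⊤ := by

  obtain ⟨hirr, htot⟩ := hT
  ext u v
  simp only [SimpleGraph.top_adj]
  constructor
  · rintro ⟨hne, -⟩; exact hne
  · intro hne
    suffices h : ∀ u v : V, A u v → CompAdj A u v by
      rcases (htot u v hne).1 with h1 | h1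
      · exact h u v h1
      · exact ((compGraph A).adj_symm (h v u h1))
    clear hne u v
    intro u v huv
    have hne : u ≠ v := fun h => hirr u (h ▸ huv)
    have hvu : ¬ A v u := fun h => (htot u v hne).2 ⟨huv, h⟩
    obtain ⟨s, hus, hsv⟩ : ∃ s, A u s ∧ s ≠ v := by
      have h2 := hdeg u
      obtain ⟨a, b, ha, hb, hab⟩ :=
        (Set.one_lt_ncard_iff (Set.toFinite _)).1 (lt_of_lt_of_le one_lt_two h2)
      by_cases hav : a = v
      · exact ⟨b, hb, by rintro rfl; exact hab hav⟩
      · exact ⟨a, ha, hav⟩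
    have hsu : s ≠ u := fun h => hirr u (h ▸ hus)
    by_cases hvs : A v s
    · exact ⟨hne, s, hsu, hsv, Or.inl ⟨hus, Or.inl hvs⟩⟩
    · obtain ⟨t, hvt⟩ : ∃ t, A v t := by
        have h2 := hdeg v
        obtain ⟨a, b, ha, hb, hab⟩ :=
          (Set.one_lt_ncard_iff (Set.toFinite _)).1 (lt_of_lt_of_le one_lt_two h2)
        exact ⟨a, ha⟩
      have htu : t ≠ u := fun h => hvu (h ▸ hvt)
      have htv : t ≠ v := fun h => hirr v (h ▸ hvt)
      have hts : t ≠ s := fun h => hvs (h ▸ hvt)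
      rcases (htot t s hts).1 with h1 | h1
      · exact ⟨hne, s, hsu, hsv, Or.inl ⟨hus, Or.inr ⟨t, htu, hvt, h1⟩⟩⟩
      · exact ⟨hne, t, htu, htv, Or.inr ⟨hvt, Or.inr ⟨s, hsv, hus, h1⟩⟩⟩
end

section
/- For every integer n ≥ 5, there exists a tournament D of order n whose (1,2)-step competition graph C_{1,2}(D) is complete. -/
def Good (n : ℕ) : Prop :=
  ∃ A : Fin n → Fin n → Prop, IsTournament A ∧ (∀ u v, u ≠ v → CompAdj A u v) ∧
    ∃ a w1 w2 : Fin n, w1 ≠ w2 ∧ A a w1 ∧ A a w2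

lemma compAdj_symm {V : Type*} {A : V → V → Prop} {u v : V} (h : CompAdj A u v) :
    CompAdj A v u := by
  obtain ⟨hne, w, h1, h2, h3⟩ := h
  exact ⟨hne.symm, w, h2, h1, h3.symm⟩

lemma step (n : ℕ) (hn : 3 ≤ n) (h : Good n) : Good (n + 1) := by
  classical
  obtain ⟨A, ⟨hirr, htot⟩, hcomp, a, w1, w2, hw12, haw1, haw2⟩ := h
  set L : Fin (n+1) := Fin.last n with hL
  set c : Fin n → Fin (n+1) := Fin.castSucc with hc
  have hcinj : Function.Injective c := Fin.castSucc_injective n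
  have hcL : ∀ x : Fin n, c x ≠ L := fun x => Fin.castSucc_lt_last x |>.ne
  let A' : Fin (n+1) → Fin (n+1) → Prop := fun u v =>
    Fin.lastCases (motive := fun _ => Prop)
      (Fin.lastCases (motive := fun _ => Prop) False (fun v' => v' ≠ a) v)
      (fun u' => Fin.lastCases (motive := fun _ => Prop) (u' = a) (fun v' => A u' v') v) u
  have eLL : A' L L ↔ False := by simp [A', hL]
  have eLc : ∀ v', A' L (c v') ↔ v' ≠ a := by intro v'; simp [A', hL, hc]
  have ecL : ∀ u', A' (c u') L ↔ u' = a := by intro u'; simp [A', hL, hc]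
  have ecc : ∀ u' v', A' (c u') (c v') ↔ A u' v' := by intro u' v'; simp [A', hL, hc]
  -- every old vertex has an out-neighbour
  have hout : ∀ v : Fin n, ∃ w, A v w := by
    intro v
    have hcard : 1 < Fintype.card (Fin n) := by simp; omega
    obtain ⟨u, hu⟩ := Fintype.exists_ne_of_one_lt_card hcard v
    obtain ⟨-, w, -, -, hbr⟩ := hcomp u v hu
    rcases hbr with ⟨-, hvw | ⟨z, -, hvz, -⟩⟩ | ⟨hvw, -⟩
    · exact ⟨w, hvw⟩
    · exact ⟨z, hvz⟩
    · exact ⟨w, hvw⟩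
  have hw1a : w1 ≠ a := fun h => hirr a (h ▸ haw1)
  have hw2a : w2 ≠ a := fun h => hirr a (h ▸ haw2)
  -- tournament
  have hT : IsTournament A' := by
    constructor
    · intro u
      cases u using Fin.lastCases with
      | last => rw [eLL]; exact id
      | cast u' => rw [ecc]; exact hirr u'
    · intro u v huv
      cases u using Fin.lastCases with
      | last =>
        cases v using Fin.lastCases with
        | last => exact absurd rfl huv
        | cast v' =>
          rw [eLc, ecL]
          by_cases hva : v' = a
          · exact ⟨Or.inr hva, fun ⟨h1, _⟩ => h1 hva⟩
          · exact ⟨Or.inl hva, fun ⟨_, h2⟩ => hva h2⟩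
      | cast u' =>
        cases v using Fin.lastCases with
        | last =>
          rw [ecL, eLc]
          by_cases hua : u' = a
          · exact ⟨Or.inl hua, fun ⟨_, h2⟩ => h2 hua⟩
          · exact ⟨Or.inr hua, fun ⟨h1, _⟩ => hua h1⟩
        | cast v' =>
          rw [ecc, ecc]
          exact htot u' v' (fun h => huv (h ▸ rfl))
  -- completeness of comp graph
  have hLv : ∀ v' : Fin n, CompAdj A' L (c v') := by
    intro v'
    by_cases hva : v' = a
    · subst hva
      refine ⟨(hcL v').symm, c w1, hcL w1, fun h => hw1a (hcinj h), Or.inl ?_⟩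
      exact ⟨(eLc w1).mpr hw1a, Or.inl ((ecc v' w1).mpr haw1)⟩
    · by_cases hex : ∃ w, w ≠ a ∧ w ≠ v' ∧ A v' w
      · obtain ⟨w, hwa, hwv, hvw⟩ := hex
        refine ⟨(hcL v').symm, c w, hcL w, fun h => hwv (hcinj h), Or.inl ?_⟩
        exact ⟨(eLc w).mpr hwa, Or.inl ((ecc v' w).mpr hvw)⟩
      · push_neg at hex
        -- v' → a, and a → w for some w ≠ v'
        have hva2 : A v' a := by
          obtain ⟨w, hvw⟩ := hout v'
          by_cases hwa : w = a
          · exact hwa ▸ hvw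
          · by_cases hwv : w = v'
            · exact absurd (hwv ▸ hvw) (hirr v')
            · exact absurd hvw (hex w hwa hwv)
        obtain ⟨w, hwv, haw, hwa⟩ : ∃ w, w ≠ v' ∧ A a w ∧ w ≠ a := by
          by_cases h1 : w1 = v'
          · exact ⟨w2, fun h => hw12 (h1.trans h.symm), haw2, hw2a⟩
          · exact ⟨w1, h1, haw1, hw1a⟩
        refine ⟨(hcL v').symm, c w, hcL w, fun h => hwv (hcinj h), Or.inl ?_⟩
        refine ⟨(eLc w).mpr hwa, Or.inr ⟨c a, hcL a, ?_, ?_⟩⟩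
        · exact (ecc v' a).mpr hva2
        · exact (ecc a w).mpr haw
  have hcomp' : ∀ u v : Fin (n+1), u ≠ v → CompAdj A' u v := by
    intro u v huv
    cases u using Fin.lastCases with
    | last =>
      cases v using Fin.lastCases with
      | last => exact absurd rfl huv
      | cast v' => exact hLv v'
    | cast u' =>
      cases v using Fin.lastCases with
      | last => exact compAdj_symm (hLv u')
      | cast v' =>
        have huv' : u' ≠ v' := fun h => huv (h ▸ rfl)
        obtain ⟨-, w, hwu, hwv, hbr⟩ := hcomp u' v' huv'
        refine ⟨huv, c w, fun h => hwu (hcinj h), fun h => hwv (hcinj h), ?_⟩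
        rcases hbr with ⟨h1, h2⟩ | ⟨h1, h2⟩
        · refine Or.inl ⟨(ecc u' w).mpr h1, ?_⟩
          rcases h2 with h2 | ⟨z, hz, hvz, hzw⟩
          · exact Or.inl ((ecc v' w).mpr h2)
          · exact Or.inr ⟨c z, fun h => hz (hcinj h), (ecc v' z).mpr hvz, (ecc z w).mpr hzw⟩
        · refine Or.inr ⟨(ecc v' w).mpr h1, ?_⟩
          rcases h2 with h2 | ⟨z, hz, huz, hzw⟩
          · exact Or.inl ((ecc u' w).mpr h2)
          · exact Or.inr ⟨c z, fun h => hz (hcinj h), (ecc u' z).mpr huz, (ecc z w).mpr hzw⟩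
  -- new special vertex: L beats two distinct old vertices ≠ a
  obtain ⟨b1, hb1a, b2, hb2a, hb12⟩ : ∃ b1, b1 ≠ a ∧ ∃ b2, b2 ≠ a ∧ b1 ≠ b2 := by
    have : 1 < (Finset.univ.erase a : Finset (Fin n)).card := by
      rw [Finset.card_erase_of_mem (Finset.mem_univ a)]
      simp; omega
    obtain ⟨x, hx, y, hy, hxy⟩ := Finset.one_lt_card.mp this
    exact ⟨x, (Finset.mem_erase.mp hx).1, y, (Finset.mem_erase.mp hy).1, hxy⟩
  exact ⟨A', hT, hcomp', L, c b1, c b2, fun h => hb12 (hcinj h),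
    (eLc b1).mpr hb1a, (eLc b2).mpr hb2a⟩

lemma good5 : Good 5 := by
  refine ⟨fun i j => (j - i : Fin 5).val = 1 ∨ (j - i : Fin 5).val = 2, ?_, ?_, ?_⟩
  · unfold IsTournament; decide
  · unfold CompAdj; decide
  · exact ⟨0, 1, 2, by decide, by decide, by decide⟩

/-- For every integer `n ≥ 5`, there exists a tournament `D` of order `n`
whose `(1,2)`-step competition graph is complete. -/
theorem stmt8 : ∀ n : ℕ, 5 ≤ n →
    ∃ A : Fin n → Fin n → Prop, IsTournament A ∧ compGraph A = ⊤ := by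
  have key : ∀ n : ℕ, 5 ≤ n → Good n := by
    intro n hn
    induction n, hn using Nat.le_induction with
    | base => exact good5
    | succ m hm ih => exact step m (by omega) ih
  intro n hn
  obtain ⟨A, hT, hc, -⟩ := key n hn
  refine ⟨A, hT, ?_⟩
  ext u v
  show CompAdj A u v ↔ u ≠ v
  exact ⟨fun h => h.1, fun h => hc u v h⟩
end

section
/- Let k ≥ 3 be an integer, let n₁ ≥ n₂ ≥ ⋯ ≥ n_k be positive integers, and let n′₁ ≥ n′₂ ≥ ⋯ ≥ n′_k be positive integers with n′_i ≥ n_i for each 1 ≤ i ≤ k. If there exists an orientation D of the complete k-partite graph K_{n₁,…,n_k} whose (1,2)-step competition graph is complete, then there exists an orientation D′ of K_{n′₁,…,n′_k} whose (1,2)-step competition graph is complete. -/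
/-- If `K_{n₁,…,n_k}` (with `k ≥ 3` and `n₁ ≥ ⋯ ≥ n_k ≥ 1`) admits an
orientation whose `(1,2)`-step competition graph is complete, then so does
`K_{n′₁,…,n′_k}` whenever `n′₁ ≥ ⋯ ≥ n′_k ≥ 1` and `n′ᵢ ≥ nᵢ` for each `i`. -/
theorem stmt10 (k : ℕ) (hk : 3 ≤ k) (n n' : Fin k → ℕ)
    (hpos : ∀ i, 0 < n i) (hpos' : ∀ i, 0 < n' i)
    (hanti : Antitone n) (hanti' : Antitone n') (hle : ∀ i, n i ≤ n' i)
    (h : ∃ A : (Σ i : Fin k, Fin (n i)) → (Σ i : Fin k, Fin (n i)) → Prop,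
      IsCompleteMultipartiteOrientation A Sigma.fst ∧ compGraph A = ⊤) :
    ∃ A' : (Σ i : Fin k, Fin (n' i)) → (Σ i : Fin k, Fin (n' i)) → Prop,
      IsCompleteMultipartiteOrientation A' Sigma.fst ∧ compGraph A' = ⊤ := by
  obtain ⟨A, ⟨hA1, hA2⟩, hC⟩ := h
  -- part-preserving surjection with section
  let f : (Σ i : Fin k, Fin (n' i)) → (Σ i : Fin k, Fin (n i)) := fun x =>
    ⟨x.1, if h : (x.2 : ℕ) < n x.1 then ⟨x.2, h⟩ else ⟨0, hpos x.1⟩⟩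
  let s : (Σ i : Fin k, Fin (n i)) → (Σ i : Fin k, Fin (n' i)) := fun x =>
    ⟨x.1, Fin.castLE (hle x.1) x.2⟩
  have hfs : ∀ x : (Σ i : Fin k, Fin (n i)), f (s x) = x := by
    rintro ⟨i, j⟩
    simp only [f, s, Fin.castLE]
    rw [dif_pos j.isLt]
  have hfst : ∀ x : (Σ i : Fin k, Fin (n' i)), (f x).1 = x.1 := fun _ => rfl
  -- completeness of the original competition graph, pointwise
  have hadj : ∀ u v : (Σ i : Fin k, Fin (n i)), u ≠ v → CompAdj A u v := by
    intro u v huv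
    have : (⊤ : SimpleGraph (Σ i : Fin k, Fin (n i))).Adj u v := huv
    rw [← hC] at this
    exact this
  -- every vertex of V has an out-neighbour
  have hout : ∀ x : (Σ i : Fin k, Fin (n i)), ∃ w, A x w := by
    intro x
    obtain ⟨y, hy⟩ : ∃ y : (Σ i : Fin k, Fin (n i)), y ≠ x := by
      by_cases h0 : x.1 = ⟨0, by omega⟩
      · exact ⟨⟨⟨1, by omega⟩, ⟨0, hpos _⟩⟩, by
          intro hxy; rw [← hxy] at h0; simp at h0⟩
      · exact ⟨⟨⟨0, by omega⟩, ⟨0, hpos _⟩⟩, by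
          intro hxy; rw [← hxy] at h0; simp at h0⟩
    obtain ⟨-, w, -, -, hc⟩ := hadj x y hy.symm
    rcases hc with ⟨hxw, -⟩ | ⟨-, hxw | ⟨z, -, hxz, -⟩⟩
    · exact ⟨w, hxw⟩
    · exact ⟨w, hxw⟩
    · exact ⟨z, hxz⟩
  refine ⟨fun u v => A (f u) (f v), ⟨?_, ?_⟩, ?_⟩
  · intro u v huv
    exact hA1 (f u) (f v) (by rw [hfst, hfst]; exact huv)
  · intro u v huv
    exact hA2 (f u) (f v) (by rw [hfst, hfst]; exact huv)
  · ext u v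
    simp only [SimpleGraph.top_adj]
    constructor
    · rintro ⟨hne, -⟩; exact hne
    · intro huv
      refine ⟨huv, ?_⟩
      by_cases hfe : f u = f v
      · -- clones: common out-neighbour of f u
        obtain ⟨w, hw⟩ := hout (f u)
        have hwne : w ≠ f u := by
          intro h; exact hA1 (f u) w (by rw [h]) hw
        refine ⟨s w, ?_, ?_, Or.inl ⟨?_, Or.inl ?_⟩⟩
        · intro h; apply hwne; rw [← h, hfs]
        · intro h; apply hwne; rw [hfe, ← h, hfs]
        · show A (f u) (f (s w)); rw [hfs]; exact hw
        · show A (f v) (f (s w)); rw [hfs, ← hfe]; exact hw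
      · obtain ⟨-, w, hw1, hw2, hc⟩ := hadj (f u) (f v) hfe
        have hsw1 : s w ≠ u := by intro h; apply hw1; rw [← h, hfs]
        have hsw2 : s w ≠ v := by intro h; apply hw2; rw [← h, hfs]
        refine ⟨s w, hsw1, hsw2, ?_⟩
        rcases hc with ⟨huw, hrest⟩ | ⟨hvw, hrest⟩
        · refine Or.inl ⟨by show A (f u) (f (s w)); rw [hfs]; exact huw, ?_⟩
          rcases hrest with hvw | ⟨z, hz, hvz, hzw⟩
          · exact Or.inl (by show A (f v) (f (s w)); rw [hfs]; exact hvw)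
          · refine Or.inr ⟨s z, ?_, ?_, ?_⟩
            · intro h; apply hz; rw [← h, hfs]
            · show A (f v) (f (s z)); rw [hfs]; exact hvz
            · show A (f (s z)) (f (s w)); rw [hfs, hfs]; exact hzw
        · refine Or.inr ⟨by show A (f v) (f (s w)); rw [hfs]; exact hvw, ?_⟩
          rcases hrest with huw | ⟨z, hz, huz, hzw⟩
          · exact Or.inl (by show A (f u) (f (s w)); rw [hfs]; exact huw)
          · refine Or.inr ⟨s z, ?_, ?_, ?_⟩
            · intro h; apply hz; rw [← h, hfs]
            · show A (f u) (f (s z)); rw [hfs]; exact huz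
            · show A (f (s z)) (f (s w)); rw [hfs, hfs]; exact hzw
end

section
/- Let D be a multipartite tournament with at least 3 vertices whose (1,2)-step competition graph C_{1,2}(D) is complete. Then every vertex of D has outdegree at least 2. -/
/-- Let `D` be a multipartite tournament with at least 3 vertices whose
`(1,2)`-step competition graph is complete. Then every vertex of `D` has outdegree at
least 2. -/
theorem stmt12 {V ι : Type*} [Fintype V] [Fintype ι]
    (A : V → V → Prop) (p : V → ι) (hD : IsMultipartiteTournament A p)
    (hcard : 3 ≤ Fintype.card V) (hcomp : compGraph A = ⊤) :
    ∀ v : V, 2 ≤ {w | A v w}.ncard := by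
  intro v
  have hloop : ∀ u : V, ¬ A u u := fun u => hD.2.2.1 u u rfl
  have hadj : ∀ u w : V, u ≠ w → CompAdj A u w := by
    intro u w huw
    have : (compGraph A).Adj u w := by rw [hcomp]; exact huw
    exact this
  -- first out-neighbour
  obtain ⟨u, hu⟩ : ∃ u : V, u ≠ v := Fintype.exists_ne_of_one_lt_card (by omega) v
  obtain ⟨x, hxv, hAvx⟩ : ∃ x, x ≠ v ∧ A v x := by
    obtain ⟨-, w, hwu, hwv, hcases⟩ := hadj u v hu
    rcases hcases with ⟨-, hw⟩ | ⟨hvw, -⟩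
    · rcases hw with hvw | ⟨z, -, hvz, -⟩
      · exact ⟨w, hwv, hvw⟩
      · exact ⟨z, fun h => hloop v (h ▸ hvz), hvz⟩
    · exact ⟨w, hwv, hvw⟩
  -- second out-neighbour
  obtain ⟨y, hyx, hAvy⟩ : ∃ y, y ≠ x ∧ A v y := by
    obtain ⟨-, w, hwv, hwx, hcases⟩ := hadj v x hxv.symm
    rcases hcases with ⟨hvw, -⟩ | ⟨-, hw⟩
    · exact ⟨w, hwx, hvw⟩
    · rcases hw with hvw | ⟨z, hzx, hvz, -⟩
      · exact ⟨w, hwx, hvw⟩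
      · exact ⟨z, hzx, hvz⟩
  have hsub : ({x, y} : Set V) ⊆ {w | A v w} := by
    intro t ht
    rcases ht with rfl | rfl
    · exact hAvx
    · exact hAvy
  calc 2 = ({x, y} : Set V).ncard := (Set.ncard_pair (Ne.symm hyx)).symm
    _ ≤ {w | A v w}.ncard := Set.ncard_le_ncard hsub (Set.toFinite _)
end

section
/- Let D be a tight multipartite tournament with no sinks, and suppose S = {u₁, u₂} is an anti-{1,2}-competing set of D. If the graph C_{1,2}(D) − {u₁, u₂} is not complete, then either u₂ is the unique out-neighbor of u₁ in D, or u₁ is the unique out-neighbor of u₂ in D. -/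
lemma stmt13_aux {V ι : Type*} (A : V → V → Prop) (p : V → ι)
    (hsame : ∀ u v : V, p u = p v → ¬ A u v)
    (hdiff : ∀ u v : V, p u ≠ p v → (A u v ∨ A v u) ∧ ¬ (A u v ∧ A v u))
    (hnosink : ∀ x : V, ∃ w, A x w)
    (u₁ u₂ : V) (hne : u₁ ≠ u₂) (h12 : A u₁ u₂)
    (hanti : ¬ CompAdj A u₁ u₂)
    (x y : V) (hxy : x ≠ y) (hx1 : x ≠ u₁) (hx2 : x ≠ u₂) (hy1 : y ≠ u₁) (hy2 : y ≠ u₂)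
    (hnc : ¬ CompAdj A x y) :
    ∀ w, A u₁ w ↔ w = u₂ := by
  have hpu : p u₁ ≠ p u₂ := fun h => hsame _ _ h h12
  have h21 : ¬ A u₂ u₁ := fun h => (hdiff u₁ u₂ hpu).2 ⟨h12, h⟩
  intro w
  constructor
  · intro hw
    by_contra hwne
    exfalso
    have hw1 : w ≠ u₁ := by rintro rfl; exact hsame _ _ rfl hw
    obtain ⟨z₀, hz₀⟩ := hnosink u₂
    have hz1 : z₀ ≠ u₁ := by rintro rfl; exact h21 hz₀
    have hz2 : z₀ ≠ u₂ := by rintro rfl; exact hsame _ _ rfl hz₀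
    have notboth : ∀ v, v ≠ u₁ → v ≠ u₂ → ¬ (A u₁ v ∧ A u₂ v) := fun v hv1 hv2 h =>
      hanti ⟨hne, v, hv1, hv2, Or.inl ⟨h.1, Or.inl h.2⟩⟩
    have no12a : ∀ v z, v ≠ u₁ → v ≠ u₂ → z ≠ u₁ → ¬ (A u₁ v ∧ A u₂ z ∧ A z v) :=
      fun v z hv1 hv2 hz h =>
        hanti ⟨hne, v, hv1, hv2, Or.inl ⟨h.1, Or.inr ⟨z, hz, h.2.1, h.2.2⟩⟩⟩
    have no12b : ∀ v z, v ≠ u₁ → v ≠ u₂ → z ≠ u₂ → ¬ (A u₂ v ∧ A u₁ z ∧ A z v) :=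
      fun v z hv1 hv2 hz h =>
        hanti ⟨hne, v, hv1, hv2, Or.inr ⟨h.1, Or.inr ⟨z, hz, h.2.1, h.2.2⟩⟩⟩
    have samepart : ∀ a, A u₁ a → a ≠ u₂ → ∀ b, A u₂ b → p a = p b := by
      intro a ha ha2 b hb
      have ha1 : a ≠ u₁ := by rintro rfl; exact hsame _ _ rfl ha
      have hb1 : b ≠ u₁ := by rintro rfl; exact h21 hb
      have hb2 : b ≠ u₂ := by rintro rfl; exact hsame _ _ rfl hb
      by_contra hab
      rcases (hdiff a b hab).1 with h' | h'
      · exact no12b b a hb1 hb2 ha2 ⟨hb, ha, h'⟩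
      · exact no12a a b ha1 ha2 hb1 ⟨ha, hb, h'⟩
    have hπ1 : p u₁ ≠ p z₀ := by
      have hwz := samepart w hw hwne z₀ hz₀
      intro h; exact hsame u₁ w (h.trans hwz.symm) hw
    have hπ2 : p u₂ ≠ p z₀ := fun h => hsame u₂ z₀ h hz₀
    have reach : ∀ v, v ≠ u₁ → v ≠ u₂ → A v u₁ ∨ A v u₂ := by
      intro v hv1 hv2
      by_cases hvπ : p v = p z₀
      · rcases (hdiff u₁ v (fun h => hπ1 (h.symm ▸ hvπ))).1 with h1 | h1
        · rcases (hdiff u₂ v (fun h => hπ2 (h.symm ▸ hvπ))).1 with h2 | h2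
          · exact absurd ⟨h1, h2⟩ (notboth v hv1 hv2)
          · exact Or.inr h2
        · exact Or.inl h1
      · by_cases hv1' : p v = p u₁
        · have hne2 : p u₂ ≠ p v := fun h => hpu (hv1' ▸ h).symm
          rcases (hdiff u₂ v hne2).1 with h2 | h2
          · exact absurd ((samepart w hw hwne v h2).symm.trans
              (samepart w hw hwne z₀ hz₀)) hvπ
          · exact Or.inr h2
        · rcases (hdiff u₁ v (Ne.symm hv1')).1 with h1 | h1
          · exact absurd (samepart v h1 hv2 z₀ hz₀) hvπ
          · exact Or.inl h1
    have key2 : ∀ a b, a ≠ b → a ≠ u₁ → a ≠ u₂ → b ≠ u₂ → A a u₂ →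
        (A b u₂ ∨ A b u₁) → CompAdj A a b := by
      intro a b hab ha1 ha2 hb2 hau hb
      refine ⟨hab, u₂, Ne.symm ha2, Ne.symm hb2, Or.inl ⟨hau, ?_⟩⟩
      rcases hb with h | h
      · exact Or.inl h
      · exact Or.inr ⟨u₁, Ne.symm ha1, h, h12⟩
    rcases reach x hx1 hx2 with rx | rx <;> rcases reach y hy1 hy2 with ry | ry
    · exact hnc ⟨hxy, u₁, Ne.symm hx1, Ne.symm hy1, Or.inl ⟨rx, Or.inl ry⟩⟩
    · exact hnc (compAdj_symm (key2 y x hxy.symm hy1 hy2 hx2 ry (Or.inr rx)))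
    · exact hnc (key2 x y hxy hx1 hx2 hy2 rx (Or.inr ry))
    · exact hnc (key2 x y hxy hx1 hx2 hy2 rx (Or.inl ry))
  · rintro rfl; exact h12

/-- Let `D` be a tight multipartite tournament with no sinks, and suppose
`S = {u₁, u₂}` is an anti-`{1,2}`-competing set of `D`. If `C_{1,2}(D) − {u₁, u₂}` is not
complete, then either `u₂` is the unique out-neighbor of `u₁`, or `u₁` is the unique
out-neighbor of `u₂`. -/
theorem stmt13 {V ι : Type*} [Fintype V] [Fintype ι]
    (A : V → V → Prop) (p : V → ι) (hD : IsMultipartiteTournament A p)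
    (htight : IsTight A p) (hnosink : ∀ x : V, ∃ w, A x w)
    (u₁ u₂ : V) (hne : u₁ ≠ u₂) (hanti : ¬ (compGraph A).Adj u₁ u₂)
    (hnoncomplete : ∃ x y : V, x ≠ y ∧ x ≠ u₁ ∧ x ≠ u₂ ∧ y ≠ u₁ ∧ y ≠ u₂ ∧
      ¬ (compGraph A).Adj x y) :
    (∀ w, A u₁ w ↔ w = u₂) ∨ (∀ w, A u₂ w ↔ w = u₁) := by
  have hsame := hD.2.2.1
  have hdiff := hD.2.2.2
  have hanti' : ¬ CompAdj A u₁ u₂ := hanti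
  have hpu : p u₁ ≠ p u₂ := fun h => hanti' (htight u₁ u₂ hne h)
  obtain ⟨x, y, hxy, hx1, hx2, hy1, hy2, hnc⟩ := hnoncomplete
  have hnc' : ¬ CompAdj A x y := hnc
  rcases (hdiff u₁ u₂ hpu).1 with h | h
  · exact Or.inl (stmt13_aux A p hsame hdiff hnosink u₁ u₂ hne h hanti'
      x y hxy hx1 hx2 hy1 hy2 hnc')
  · exact Or.inr (stmt13_aux A p hsame hdiff hnosink u₂ u₁ hne.symm h
      (fun hc => hanti' (compAdj_symm hc)) x y hxy hx2 hx1 hy2 hy1 hnc')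
end

section
/- Let D be a tight multipartite tournament with no sinks, and suppose there are vertices u₁ and u₂ such that u₂ is the unique out-neighbor of u₁ in D. Then for any anti-{1,2}-competing set S of size 2 with S ∩ {u₁, u₂} = ∅, the following hold: (1) the vertices of S can be labeled v₁ and v₂ so that v₂ is the unique out-neighbor of v₁ in D; (2) with this labeling, v₁ and u₁ belong to the same partite set of D, and v₂ and u₂ belong to distinct partite sets of D. -/
/-- Let `D` be a tight multipartite tournament with no sinks, and suppose
`u₂` is the unique out-neighbor of `u₁`. Then for any anti-`{1,2}`-competing set `S` of
size 2 with `S ∩ {u₁,u₂} = ∅`: (1) the vertices of `S` can be labeled `v₁`, `v₂` so that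
`v₂` is the unique out-neighbor of `v₁`; (2) with this labeling, `v₁` and `u₁` belong to
the same partite set, and `v₂` and `u₂` belong to distinct partite sets. -/
theorem stmt14 {V ι : Type*} [Fintype V] [Fintype ι]
    (A : V → V → Prop) (p : V → ι) (hD : IsMultipartiteTournament A p)
    (htight : IsTight A p) (hnosink : ∀ x : V, ∃ w, A x w)
    (u₁ u₂ : V) (hstar : ∀ w, A u₁ w ↔ w = u₂) :
    ∀ v₁ v₂ : V, v₁ ≠ v₂ → ¬ (compGraph A).Adj v₁ v₂ →
      v₁ ∉ ({u₁, u₂} : Set V) → v₂ ∉ ({u₁, u₂} : Set V) →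
      (((∀ w, A v₁ w ↔ w = v₂) ∧ p v₁ = p u₁ ∧ p v₂ ≠ p u₂) ∨
       ((∀ w, A v₂ w ↔ w = v₁) ∧ p v₂ = p u₁ ∧ p v₁ ≠ p u₂)) := by
  obtain ⟨-, -, hP1, hP2⟩ := hD
  have hAu : A u₁ u₂ := (hstar u₂).mpr rfl
  intro v₁ v₂ hne hnadj hm1 hm2
  have hnc0 : ¬ CompAdj A v₁ v₂ := hnadj
  simp only [Set.mem_insert_iff, Set.mem_singleton_iff, not_or] at hm1 hm2
  have key : ∀ a b : V, a ≠ b → ¬ CompAdj A a b →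
      a ≠ u₁ → a ≠ u₂ → b ≠ u₁ → b ≠ u₂ → p a = p u₁ →
      (∀ w, A a w ↔ w = b) ∧ p b ≠ p u₂ := by
    intro a b hab hnc ha1 ha2 hb1 hb2 hpa
    have hpab : p a ≠ p b := fun h => hnc (htight a b hab h)
    have hpb : p b ≠ p u₁ := fun h => hpab (hpa.trans h.symm)
    have hbu₁ : A b u₁ := by
      rcases (hP2 b u₁ hpb).1 with h | h
      · exact h
      · exact absurd ((hstar b).mp h) hb2
    have hau₂ : ¬ A a u₂ := by
      intro h
      exact hnc ⟨hab, u₂, fun e => ha2 e.symm, fun e => hb2 e.symm,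
        Or.inl ⟨h, Or.inr ⟨u₁, fun e => ha1 e.symm, hbu₁, hAu⟩⟩⟩
    have hout : ∀ y, A a y → y = b := by
      intro y hy
      by_contra hyb
      have hpay : p a ≠ p y := fun h => hP1 _ _ h hy
      have hpyu : p y ≠ p u₁ := fun h => hpay (hpa.trans h.symm)
      have hyu₂ : y ≠ u₂ := fun e => hau₂ (e ▸ hy)
      have hyu₁ : A y u₁ := by
        rcases (hP2 y u₁ hpyu).1 with h | h
        · exact h
        · exact absurd ((hstar y).mp h) hyu₂
      exact hnc ⟨hab, u₁, fun e => ha1 e.symm, fun e => hb1 e.symm,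
        Or.inr ⟨hbu₁, Or.inr ⟨y, hyb, hy, hyu₁⟩⟩⟩
    obtain ⟨y, hy⟩ := hnosink a
    have hab' : A a b := (hout y hy) ▸ hy
    refine ⟨fun w => ⟨hout w, fun e => e ▸ hab'⟩, ?_⟩
    obtain ⟨-, w, hw1, hw2, hcase⟩ := htight a u₁ ha1 hpa
    rcases hcase with ⟨haw, hrest⟩ | ⟨hu₁w, hrest⟩
    · have hwb : w = b := hout w haw
      rcases hrest with h | ⟨z, hz0, hz1, hz2⟩
      · exact absurd (hwb ▸ (hstar w).mp h) hb2
      · have hzu : z = u₂ := (hstar z).mp hz1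
        intro h
        exact hP1 z b (hzu ▸ h.symm) (hwb ▸ hz2)
    · have hwu : w = u₂ := (hstar w).mp hu₁w
      rcases hrest with h | ⟨z, hz0, hz1, hz2⟩
      · exact absurd (hwu ▸ h) hau₂
      · have hzb : z = b := hout z hz1
        intro h
        exact hP1 b w (hwu ▸ h) (hzb ▸ hz2)
  have hpv : p v₁ = p u₁ ∨ p v₂ = p u₁ := by
    by_contra h
    push_neg at h
    obtain ⟨h1', h2'⟩ := h
    have a1 : A v₁ u₁ := by
      rcases (hP2 v₁ u₁ h1').1 with h | h
      · exact h
      · exact absurd ((hstar v₁).mp h) hm1.2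
    have a2 : A v₂ u₁ := by
      rcases (hP2 v₂ u₁ h2').1 with h | h
      · exact h
      · exact absurd ((hstar v₂).mp h) hm2.2
    exact hnc0 ⟨hne, u₁, fun e => hm1.1 e.symm, fun e => hm2.1 e.symm,
      Or.inl ⟨a1, Or.inl a2⟩⟩
  rcases hpv with h | h
  · obtain ⟨g1, g2⟩ := key v₁ v₂ hne hnc0 hm1.1 hm1.2 hm2.1 hm2.2 h
    exact Or.inl ⟨g1, h, g2⟩
  · have hnc' : ¬ CompAdj A v₂ v₁ := fun hc => hnadj ((compGraph A).adj_symm hc)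
    obtain ⟨g1, g2⟩ := key v₂ v₁ hne.symm hnc' hm2.1 hm2.2 hm1.1 hm1.2 h
    exact Or.inr ⟨g1, h, g2⟩
end
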